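/- Trade probability is maximized at the lowest symmetric implementable price (uniform case): let A ∈ (0,1), assume the A-large condition (every (p1,p2) ∈ P satisfies p1 ≤ A, p2 ≤ A and |p1 − p2| ≤ 1 − A), assume {p ∈ (0,1] : H(p,p) ≤ 0} is nonempty, and let p̲ = inf{p ∈ (0,1] : H(p,p) ≤ 0}. Then (p̲,p̲) ∈ P and for every (p1,p2) ∈ P, p1·p2 ≥ p̲², i.e. the trade probability 1 − p1·p2 over P is maximized at (p̲, p̲). -/

import Mathlib

/-- Demand of seller 1 when ranked second (uniform match utilities). -/
noncomputable def D12 (A p1 p2 : ℝ) : ℝ := -A^2/2 + p1^2/2 - p1*p2 + A - p1 + p2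

/-- Demand of seller 2 when ranked second (uniform match utilities). -/
noncomputable def D22 (A p1 p2 : ℝ) : ℝ := -A^2/2 + p2^2/2 - p1*p2 + A + p1 - p2

/-- The bonus from being ranked first instead of second (uniform case). -/
noncomputable def bonus (A p1 p2 : ℝ) : ℝ := (1-A)^2 - (1/2)*(p1-p2)^2

/-- Seller 1's optimal deviation value when ranked second. -/
noncomputable def M1 (A p2 : ℝ) : ℝ :=
  sSup ((fun p' => p' * D12 A p' p2) '' Set.Icc (0:ℝ) 1)

/-- Seller 2's optimal deviation value when ranked second. -/
noncomputable def M2 (A p1 : ℝ) : ℝ :=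
  sSup ((fun p' => p' * D22 A p1 p') '' Set.Icc (0:ℝ) 1)

/-- The function whose nonpositivity characterizes implementable prices. -/
noncomputable def H (A p1 p2 : ℝ) : ℝ := M1 A p2 / p1 + M2 A p1 / p2 + p1*p2 - 1

/-- The set of implementable prices. -/
def implementableP (A : ℝ) : Set (ℝ × ℝ) :=
  {q | 0 < q.1 ∧ q.1 ≤ 1 ∧ 0 < q.2 ∧ q.2 ≤ 1 ∧ H A q.1 q.2 ≤ 0}

/-- The set of implementable search orders at prices `(p1, p2)`. -/
def phi (A p1 p2 : ℝ) : Set ℝ :=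
  {α | α ∈ Set.Icc (0:ℝ) 1
    ∧ M1 A p2 ≤ p1 * D12 A p1 p2 + α * p1 * bonus A p1 p2
    ∧ M2 A p1 ≤ p2 * D22 A p1 p2 + (1-α) * p2 * bonus A p1 p2}

lemma M2_eq_M1 (A x : ℝ) : M2 A x = M1 A x := by
  unfold M1 M2
  congr 1
  apply Set.image_congr
  intro t _
  simp only [D12, D22]; ring

lemma M_bdd (A x : ℝ) (hA0 : 0 ≤ A) (hA1 : A ≤ 1) (hx0 : 0 ≤ x) (hx1 : x ≤ 1) :
    BddAbove ((fun p' => p' * D12 A p' x) '' Set.Icc (0:ℝ) 1) := by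
  refine ⟨3, ?_⟩
  rintro y ⟨t, ⟨ht0, ht1⟩, rfl⟩
  simp only [D12]
  nlinarith [sq_nonneg t, sq_nonneg A, mul_nonneg ht0 hx0]

lemma M_ge (A x t : ℝ) (hA0 : 0 ≤ A) (hA1 : A ≤ 1) (hx0 : 0 ≤ x) (hx1 : x ≤ 1)
    (ht : t ∈ Set.Icc (0:ℝ) 1) : t * D12 A t x ≤ M1 A x :=
  le_csSup (M_bdd A x hA0 hA1 hx0 hx1) ⟨t, ht, rfl⟩

lemma M_le (A x c : ℝ) (hb : ∀ t ∈ Set.Icc (0:ℝ) 1, t * D12 A t x ≤ c) : M1 A x ≤ c := by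
  refine csSup_le ⟨0 * D12 A 0 x, ⟨0, by simp, rfl⟩⟩ ?_
  rintro y ⟨t, ht, rfl⟩; exact hb t ht

lemma M_nonneg (A x : ℝ) (hA0 : 0 ≤ A) (hA1 : A ≤ 1) (hx0 : 0 ≤ x) (hx1 : x ≤ 1) :
    0 ≤ M1 A x := by
  have := M_ge A x 0 hA0 hA1 hx0 hx1 (by simp)
  simpa using this

lemma M_mono (A x y : ℝ) (hA0 : 0 ≤ A) (hA1 : A ≤ 1) (hx0 : 0 ≤ x) (hxy : x ≤ y)
    (hy1 : y ≤ 1) : M1 A x ≤ M1 A y := by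
  refine M_le A x _ fun t ht => ?_
  have h1 := M_ge A y t hA0 hA1 (le_trans hx0 hxy) hy1 ht
  have : t * D12 A t x ≤ t * D12 A t y := by
    simp only [D12]
    nlinarith [mul_nonneg (mul_nonneg ht.1 (sub_nonneg.mpr ht.2)) (sub_nonneg.mpr hxy)]
  linarith

lemma M_mid (A x y : ℝ) (hA0 : 0 ≤ A) (hA1 : A ≤ 1) (hx0 : 0 ≤ x) (hx1 : x ≤ 1)
    (hy0 : 0 ≤ y) (hy1 : y ≤ 1) : M1 A ((x+y)/2) ≤ (M1 A x + M1 A y)/2 := by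
  refine M_le A _ _ fun t ht => ?_
  have h1 := M_ge A x t hA0 hA1 hx0 hx1 ht
  have h2 := M_ge A y t hA0 hA1 hy0 hy1 ht
  have e : t * D12 A t ((x+y)/2) = (t * D12 A t x + t * D12 A t y)/2 := by
    simp only [D12]; ring
  linarith

lemma M_lb (A x : ℝ) (hA0 : 0 < A) (hA1 : A ≤ 1) (hx0 : 0 ≤ x) (hx1 : x ≤ 1) :
    A^2/16 ≤ M1 A x := by
  have h := M_ge A x (A/2) hA0.le hA1 hx0 hx1 ⟨by linarith, by linarith⟩
  have : A^2/16 ≤ (A/2) * D12 A (A/2) x := by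
    simp only [D12]; nlinarith [mul_nonneg hA0.le hx0, sq_nonneg A]
  linarith

/-- Key symmetric-point inequality: the geometric mean of an implementable
price pair is itself a symmetric implementable price. -/
lemma H_geom_le (A q1 q2 : ℝ) (hA0 : 0 < A) (hA1 : A ≤ 1)
    (h1 : 0 < q1) (h1' : q1 ≤ 1) (h2 : 0 < q2) (h2' : q2 ≤ 1)
    (hH : H A q1 q2 ≤ 0) :
    H A (Real.sqrt (q1*q2)) (Real.sqrt (q1*q2)) ≤ 0 := by
  set g := Real.sqrt (q1*q2) with hgdef
  have hq12 : 0 < q1 * q2 := mul_pos h1 h2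
  have hg0 : 0 < g := Real.sqrt_pos.mpr hq12
  have hgg : g * g = q1 * q2 := Real.mul_self_sqrt hq12.le
  have hg1 : g ≤ 1 := by
    nlinarith [hgg]
  set m := (q1 + q2)/2 with hmdef
  have hm0 : 0 < m := by positivity
  have hm1 : m ≤ 1 := by simp only [hmdef]; linarith
  have hgm : g ≤ m := by nlinarith [hgg, sq_nonneg (q1 - q2)]
  -- main algebraic chain : 2*g*M1(g) ≤ q1*M1(q1) + q2*M1(q2)
  have hMg := M_nonneg A g hA0.le hA1 hg0.le hg1
  have hM1 := M_nonneg A q1 hA0.le hA1 h1.le h1'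
  have hM2 := M_nonneg A q2 hA0.le hA1 h2.le h2'
  have step1 : g * M1 A g ≤ m * M1 A m := by
    have hmono := M_mono A g m hA0.le hA1 hg0.le hgm hm1
    nlinarith
  have step2 : M1 A m ≤ (M1 A q1 + M1 A q2)/2 :=
    M_mid A q1 q2 hA0.le hA1 h1.le h1' h2.le h2'
  have step3 : (q1 - q2) * (M1 A q1 - M1 A q2) ≥ 0 := by
    rcases le_total q1 q2 with h | h
    · have := M_mono A q1 q2 hA0.le hA1 h1.le h h2'
      nlinarith
    · have := M_mono A q2 q1 hA0.le hA1 h2.le h h1'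
      nlinarith
  have key : 2 * (g * M1 A g) ≤ q1 * M1 A q1 + q2 * M1 A q2 := by
    have : m * M1 A m ≤ m * ((M1 A q1 + M1 A q2)/2) :=
      mul_le_mul_of_nonneg_left step2 hm0.le
    nlinarith [step1, step3]
  -- translate H A q1 q2 ≤ 0 : clear denominators
  have hHq : M1 A q2 / q1 + M1 A q1 / q2 + q1*q2 - 1 ≤ 0 := by
    have := hH
    unfold H at this
    rwa [M2_eq_M1] at this
  have hprod : q2 * M1 A q2 + q1 * M1 A q1 ≤ (1 - q1*q2) * (q1*q2) := by
    have h' : (M1 A q2 / q1 + M1 A q1 / q2) * (q1*q2) ≤ (1 - q1*q2) * (q1*q2) :=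
      mul_le_mul_of_nonneg_right (by linarith) hq12.le
    have e : (M1 A q2 / q1 + M1 A q1 / q2) * (q1*q2)
        = q2 * M1 A q2 + q1 * M1 A q1 := by
      field_simp
    linarith [e ▸ h']
  -- conclude
  have hfin : 2 * M1 A g ≤ (1 - g*g) * g := by
    have h2g : 2 * (M1 A g) * g ≤ ((1 - g*g) * g) * g := by nlinarith [key, hprod, hgg]
    exact le_of_mul_le_mul_right h2g hg0
  unfold H
  rw [M2_eq_M1]
  have : M1 A g / g + M1 A g / g ≤ 1 - g * g := by
    rw [← add_div, div_le_iff₀ hg0]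
    nlinarith [hfin]
  linarith

/-- Trade probability is maximized at the lowest symmetric implementable price
(uniform case): `(p̲,p̲) ∈ P` and every `(p1,p2) ∈ P` has `p1·p2 ≥ p̲²`,
i.e. the trade probability `1 - p1·p2` is maximized at `(p̲,p̲)`. -/
theorem trade_probability_max
    (A : ℝ) (hA : A ∈ Set.Ioo (0:ℝ) 1)
    (hlarge : ∀ q ∈ implementableP A, q.1 ≤ A ∧ q.2 ≤ A ∧ |q.1 - q.2| ≤ 1 - A)
    (hne : {p : ℝ | p ∈ Set.Ioc (0:ℝ) 1 ∧ H A p p ≤ 0}.Nonempty)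
    (plow : ℝ) (hplow : plow = sInf {p : ℝ | p ∈ Set.Ioc (0:ℝ) 1 ∧ H A p p ≤ 0}) :
    (plow, plow) ∈ implementableP A
      ∧ ∀ q ∈ implementableP A, plow^2 ≤ q.1 * q.2 := by
  obtain ⟨hA0, hA1⟩ := hA
  set S := {p : ℝ | p ∈ Set.Ioc (0:ℝ) 1 ∧ H A p p ≤ 0} with hSdef
  -- every element of S is at least A^2/8
  have hSlb : ∀ p ∈ S, A^2/8 ≤ p := by
    rintro p ⟨⟨hp0, hp1⟩, hHp⟩
    have hHp' : M1 A p / p + M1 A p / p + p*p - 1 ≤ 0 := by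
      have := hHp; unfold H at this; rwa [M2_eq_M1] at this
    have h2 : M1 A p + M1 A p ≤ (1 - p*p) * p := by
      have h'' : (M1 A p + M1 A p) / p ≤ 1 - p*p := by
        rw [← add_div] at hHp'; linarith
      rw [div_le_iff₀ hp0] at h''
      linarith
    have hlb := M_lb A p hA0 hA1.le hp0.le hp1
    nlinarith [mul_nonneg (mul_nonneg hp0.le hp0.le) hp0.le]
  have hbdd : BddBelow S := ⟨A^2/8, hSlb⟩
  have hplow_lb : A^2/8 ≤ plow := by
    rw [hplow]; exact le_csInf hne hSlb
  have hplow0 : 0 < plow := lt_of_lt_of_le (by positivity) hplow_lb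
  obtain ⟨p0, hp0S⟩ := hne
  have hplow1 : plow ≤ 1 := by
    have := csInf_le hbdd hp0S
    rw [hplow]
    exact le_trans this hp0S.1.2
  -- H A plow plow ≤ 0, by approximation
  have hHlow : H A plow plow ≤ 0 := by
    by_contra hcon
    push_neg at hcon
    set ε := H A plow plow with hε
    have hε0 : 0 < ε := hcon
    have hδ : 0 < ε/2 * plow^2 := by positivity
    have hlt : sInf S < plow + ε/2 * plow^2 := by rw [← hplow]; linarith
    obtain ⟨p, hpS, hplt⟩ := exists_lt_of_csInf_lt ⟨p0, hp0S⟩ hlt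
    obtain ⟨⟨hp0, hp1⟩, hHp⟩ := hpS
    have hple : plow ≤ p := by rw [hplow]; exact csInf_le hbdd ⟨⟨hp0, hp1⟩, hHp⟩
    have hHp' : M1 A p + M1 A p ≤ (1 - p*p) * p := by
      have h' : M1 A p / p + M1 A p / p + p*p - 1 ≤ 0 := by
        have := hHp; unfold H at this; rwa [M2_eq_M1] at this
      have h'' : (M1 A p + M1 A p) / p ≤ 1 - p*p := by
        rw [← add_div] at h'; linarith
      rw [div_le_iff₀ hp0] at h''
      linarith
    have hmono := M_mono A plow p hA0.le hA1.le hplow0.le hple hp1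
    -- show ε = H A plow plow ≤ ε/2, contradiction
    have hHform : H A plow plow = M1 A plow / plow + M1 A plow / plow + plow*plow - 1 := by
      unfold H; rw [M2_eq_M1]
    have hdiv : M1 A plow / plow + M1 A plow / plow ≤ ε/2 + 1 - plow*plow := by
      rw [← add_div, div_le_iff₀ hplow0]
      have hpp : plow*plow ≤ p*p := mul_le_mul hple hple hplow0.le hp0.le
      have hc1 : plow*plow*plow ≤ p*p*p :=
        mul_le_mul hpp hple hplow0.le (mul_nonneg hp0.le hp0.le)
      have hc2 : ε/2 * (plow*plow) ≤ ε/2 * plow := by nlinarith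
      nlinarith [hHp', hmono, hplt, hc1, hc2]
    have : ε ≤ ε/2 := by rw [hε, hHform]; linarith
    linarith
  refine ⟨⟨hplow0, hplow1, hplow0, hplow1, hHlow⟩, ?_⟩
  rintro ⟨q1, q2⟩ ⟨h1, h1', h2, h2', hH⟩
  simp only at h1 h1' h2 h2' hH ⊢
  have hq12 : 0 < q1 * q2 := mul_pos h1 h2
  set g := Real.sqrt (q1*q2) with hgdef
  have hg0 : 0 < g := Real.sqrt_pos.mpr hq12
  have hgg : g * g = q1 * q2 := Real.mul_self_sqrt hq12.le
  have hg1 : g ≤ 1 := by nlinarith [hgg, mul_le_one₀ h1' h2.le h2']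
  have hgS : g ∈ S := ⟨⟨hg0, hg1⟩, H_geom_le A q1 q2 hA0 hA1.le h1 h1' h2 h2' hH⟩
  have hpg : plow ≤ g := by rw [hplow]; exact csInf_le hbdd hgS
  nlinarith [hgg, hpg, hplow0]
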